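/- Let f be a Bohr almost periodic function on ℝ with Fourier exponents in Λ. Then every uniform limit on ℝ of a sequence of translates f(· + τₙ), τₙ ∈ ℝ, is an almost periodic function that is Bohr-equivalent to f. -/

import Mathlib

noncomputable section

/-- Bohr almost periodicity: `f` is continuous and for every `ε > 0` the set of
`ε`-translation numbers of `f` is relatively dense in `ℝ`. -/
def IsAP (f : ℝ → ℂ) : Prop :=
  Continuous f ∧ ∀ ε > (0 : ℝ), ∃ l > (0 : ℝ), ∀ x : ℝ, ∃ τ ∈ Set.Icc x (x + l),
    ∀ t : ℝ, ‖f (t + τ) - f t‖ ≤ ε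

/-- `c` is the Fourier (Bohr mean) coefficient of `f` at frequency `μ`. -/
def HasFourierCoeff (f : ℝ → ℂ) (μ : ℝ) (c : ℂ) : Prop :=
  Filter.Tendsto
    (fun T : ℝ => (1 / (2 * T) : ℂ) *
      ∫ t in (-T)..T, f t * Complex.exp (-(Complex.I * (μ : ℂ) * (t : ℂ))))
    Filter.atTop (nhds c)

/-- `f` has Fourier series `∑ aⱼ e^{i λⱼ t}`: its Fourier coefficient at `λⱼ` is
`aⱼ`, and its Fourier coefficient vanishes at every other frequency. -/
def HasFourierSeries (f : ℝ → ℂ) (lam : ℕ → ℝ) (a : ℕ → ℂ) : Prop :=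
  (∀ j, HasFourierCoeff f (lam j) (a j)) ∧
    ∀ μ : ℝ, μ ∉ Set.range lam → HasFourierCoeff f μ 0

/-- Bohr's `*∼` equivalence of two series `∑ aⱼ e^{iλⱼ t}` and `∑ bⱼ e^{iλⱼ t}`:
for each `n` there is a `ℚ`-linear map `ψₙ` from the `ℚ`-span of `{λ₀, …, λₙ}`
to `ℝ` with `bⱼ = aⱼ e^{i ψₙ(λⱼ)}` for `j ≤ n`. -/
def SeriesEquiv (lam : ℕ → ℝ) (a b : ℕ → ℂ) : Prop :=
  ∀ n : ℕ, ∃ ψ : (Submodule.span ℚ (lam '' {j | j ≤ n})) →ₗ[ℚ] ℝ,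
    ∀ j (hj : j ≤ n), b j = a j *
      Complex.exp (Complex.I *
        (ψ ⟨lam j, Submodule.subset_span ⟨j, hj, rfl⟩⟩ : ℝ))

open Filter Complex intervalIntegral MeasureTheory

lemma norm_exp_eq_one {z : ℂ} (h : z.re = 0) : ‖Complex.exp z‖ = 1 := by
  rw [Complex.norm_exp, h, Real.exp_zero]

lemma IsAP.bounded {f : ℝ → ℂ} (hf : IsAP f) : ∃ C : ℝ, 0 ≤ C ∧ ∀ t, ‖f t‖ ≤ C := by
  obtain ⟨l, hl, hP⟩ := hf.2 1 one_pos
  obtain ⟨C, hC⟩ := (isCompact_Icc (a := (0:ℝ)) (b := l)).exists_bound_of_continuousOn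
    hf.1.continuousOn
  have hC0 : 0 ≤ C := le_trans (norm_nonneg _) (hC 0 ⟨le_refl _, hl.le⟩)
  refine ⟨C + 1, by linarith, fun s => ?_⟩
  obtain ⟨τ, hτ, hτ'⟩ := hP (-s)
  have h1 := hτ' s
  have h2 := hC (s + τ) ⟨by linarith [hτ.1], by linarith [hτ.2]⟩
  have h3 : ‖f s‖ - ‖f (s + τ)‖ ≤ ‖f (s + τ) - f s‖ := by
    rw [norm_sub_rev]; exact norm_sub_norm_le _ _
  linarith


lemma swap_lim (G : ℝ → ℂ) (F : ℕ → ℝ → ℂ) (c : ℕ → ℂ)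
    (hF : ∀ n, Filter.Tendsto (F n) Filter.atTop (nhds (c n)))
    (hclose : ∀ ε > (0:ℝ), ∃ N, ∀ n ≥ N, ∀ T > (0:ℝ), ‖G T - F n T‖ ≤ ε) :
    ∃ L, Filter.Tendsto c Filter.atTop (nhds L) ∧
      Filter.Tendsto G Filter.atTop (nhds L) := by
  have hcauchy : CauchySeq c := by
    rw [Metric.cauchySeq_iff]
    intro ε hε
    obtain ⟨N, hN⟩ := hclose (ε/3) (by positivity)
    refine ⟨N, fun m hm n hn => ?_⟩
    have ht : Filter.Tendsto (fun T => dist (F m T) (F n T)) Filter.atTop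
        (nhds (dist (c m) (c n))) := (hF m).dist (hF n)
    have hb : ∀ᶠ T in Filter.atTop, dist (F m T) (F n T) ≤ 2*(ε/3) := by
      filter_upwards [eventually_gt_atTop (0:ℝ)] with T hT
      have h1 := hN m hm T hT; have h2 := hN n hn T hT
      calc dist (F m T) (F n T) ≤ dist (G T) (F m T) + dist (G T) (F n T) := by
            rw [dist_comm (G T) (F m T)]; exact dist_triangle _ _ _
        _ ≤ 2*(ε/3) := by
            rw [dist_eq_norm, dist_eq_norm]; linarith
    have := le_of_tendsto ht hb
    linarith
  obtain ⟨L, hL⟩ := cauchySeq_tendsto_of_complete hcauchy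
  refine ⟨L, hL, ?_⟩
  rw [Metric.tendsto_nhds]
  intro ε hε
  obtain ⟨N, hN⟩ := hclose (ε/3) (by positivity)
  obtain ⟨n, hn1, hn2⟩ : ∃ n, n ≥ N ∧ dist (c n) L < ε/3 :=
    ((eventually_ge_atTop N).and ((Metric.tendsto_nhds.mp hL) _ (by positivity))).exists
  have h3 : ∀ᶠ T in Filter.atTop, dist (F n T) (c n) < ε/3 :=
    (Metric.tendsto_nhds.mp (hF n)) _ (by positivity)
  filter_upwards [h3, eventually_gt_atTop (0:ℝ)] with T hT1 hT2
  have h4 := hN n hn1 T hT2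
  calc dist (G T) L ≤ dist (G T) (F n T) + dist (F n T) (c n) + dist (c n) L :=
        dist_triangle4 _ _ _ _
    _ < ε := by rw [dist_eq_norm, dist_eq_norm, dist_eq_norm] at *; linarith

lemma coeff_translate {f : ℝ → ℂ} (hcont : Continuous f) {C : ℝ} (hC0 : 0 ≤ C)
    (hC : ∀ t, ‖f t‖ ≤ C) {μ : ℝ} {c : ℂ} (h : HasFourierCoeff f μ c) (τ : ℝ) :
    HasFourierCoeff (fun t => f (t + τ)) μ (c * Complex.exp (Complex.I * μ * τ)) := by
  set φ : ℝ → ℂ := fun s => f s * Complex.exp (-(Complex.I * (μ : ℂ) * (s : ℂ))) with hφdef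
  have hφc : Continuous φ := by
    apply hcont.mul
    exact Complex.continuous_exp.comp (by continuity)
  have hφi : ∀ a b : ℝ, IntervalIntegrable φ volume a b := fun a b =>
    hφc.intervalIntegrable a b
  have hφnorm : ∀ s, ‖φ s‖ ≤ C := by
    intro s
    rw [hφdef]
    simp only []
    rw [norm_mul, norm_exp_eq_one (by simp), mul_one]
    exact hC s
  have h1 : ∀ T : ℝ, (∫ t in (-T)..T,
      f (t + τ) * Complex.exp (-(Complex.I * (μ : ℂ) * (t : ℂ))))
      = Complex.exp (Complex.I * μ * τ) * ∫ s in (-T+τ)..(T+τ), φ s := by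
    intro T
    have key : ∀ t : ℝ, f (t + τ) * Complex.exp (-(Complex.I * (μ : ℂ) * (t : ℂ)))
        = Complex.exp (Complex.I * μ * τ) * φ (t + τ) := by
      intro t
      rw [hφdef]
      simp only []
      rw [show Complex.exp (Complex.I * μ * τ) *
          (f (t+τ) * Complex.exp (-(Complex.I * (μ:ℂ) * ((t+τ:ℝ):ℂ))))
          = f (t+τ) * (Complex.exp (Complex.I * μ * τ) *
            Complex.exp (-(Complex.I * (μ:ℂ) * ((t+τ:ℝ):ℂ)))) from by ring, ← Complex.exp_add]
      congr 2
      push_cast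
      ring
    simp_rw [key]
    rw [intervalIntegral.integral_const_mul, intervalIntegral.integral_comp_add_right φ τ]
  have h2 : ∀ T : ℝ, (∫ s in (-T+τ)..(T+τ), φ s)
      = (∫ s in (-T+τ)..(-T), φ s) + (∫ s in (-T)..T, φ s) + ∫ s in T..(T+τ), φ s := by
    intro T
    have e1 := intervalIntegral.integral_add_adjacent_intervals (μ := volume) (f := φ)
      (a := -T+τ) (b := -T) (c := T+τ) (hφi _ _) (hφi _ _)
    have e2 := intervalIntegral.integral_add_adjacent_intervals (μ := volume) (f := φ)
      (a := -T) (b := T) (c := T+τ) (hφi _ _) (hφi _ _)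
    rw [← e1, ← e2]
    ring
  have heq : ∀ T : ℝ, (1 / (2 * (T:ℂ))) * ∫ t in (-T)..T,
      f (t + τ) * Complex.exp (-(Complex.I * (μ : ℂ) * (t : ℂ)))
      = Complex.exp (Complex.I * μ * τ) * ((1 / (2 * (T:ℂ))) * ∫ t in (-T)..T, φ t)
        + Complex.exp (Complex.I * μ * τ) * ((1 / (2 * (T:ℂ))) *
          ((∫ s in (-T+τ)..(-T), φ s) + ∫ s in T..(T+τ), φ s)) := by
    intro T
    rw [h1, h2]
    ring
  have hterm1 : Filter.Tendsto
      (fun T : ℝ => Complex.exp (Complex.I * μ * τ) *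
        ((1 / (2 * (T:ℂ))) * ∫ t in (-T)..T, φ t)) Filter.atTop
      (nhds (Complex.exp (Complex.I * μ * τ) * c)) :=
    tendsto_const_nhds.mul h
  have hterm2 : Filter.Tendsto
      (fun T : ℝ => Complex.exp (Complex.I * μ * τ) * ((1 / (2 * (T:ℂ))) *
        ((∫ s in (-T+τ)..(-T), φ s) + ∫ s in T..(T+τ), φ s))) Filter.atTop (nhds 0) := by
    apply squeeze_zero_norm' (a := fun T : ℝ => (C * |τ| + C * |τ|) / (2 * T))
    · filter_upwards [eventually_gt_atTop (0:ℝ)] with T hT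
      have hint1 : ‖∫ s in (-T+τ)..(-T), φ s‖ ≤ C * |τ| := by
        have := intervalIntegral.norm_integral_le_of_norm_le_const
          (f := φ) (a := -T+τ) (b := -T) (C := C) (fun x _ => hφnorm x)
        calc ‖∫ s in (-T+τ)..(-T), φ s‖ ≤ C * |(-T) - (-T+τ)| := this
          _ = C * |τ| := by rw [show (-T) - (-T+τ) = -τ by ring, abs_neg]
      have hint2 : ‖∫ s in T..(T+τ), φ s‖ ≤ C * |τ| := by
        have := intervalIntegral.norm_integral_le_of_norm_le_const
          (f := φ) (a := T) (b := T+τ) (C := C) (fun x _ => hφnorm x)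
        calc ‖∫ s in T..(T+τ), φ s‖ ≤ C * |(T+τ) - T| := this
          _ = C * |τ| := by rw [show (T+τ) - T = τ by ring]
      have hfac : ‖(1 / (2 * (T:ℂ)))‖ = 1 / (2 * T) := by
        rw [norm_div, norm_one, show (2*(T:ℂ)) = ((2*T:ℝ):ℂ) by push_cast; ring,
          Complex.norm_real, Real.norm_eq_abs, abs_of_pos (by positivity)]
      rw [norm_mul, norm_exp_eq_one (by simp), one_mul, norm_mul, hfac]
      calc (1 / (2*T)) * ‖(∫ s in (-T+τ)..(-T), φ s) + ∫ s in T..(T+τ), φ s‖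
          ≤ (1 / (2*T)) * (C * |τ| + C * |τ|) := by
            apply mul_le_mul_of_nonneg_left _ (by positivity)
            exact le_trans (norm_add_le _ _) (add_le_add hint1 hint2)
        _ = (C * |τ| + C * |τ|) / (2 * T) := by ring
    · apply Filter.Tendsto.div_atTop tendsto_const_nhds
      exact (tendsto_id.const_mul_atTop (by norm_num : (0:ℝ) < 2))
  have := hterm1.add hterm2
  rw [add_zero] at this
  have final := this.congr (fun T => (heq T).symm)
  rw [show Complex.exp (Complex.I * μ * τ) * c = c * Complex.exp (Complex.I * μ * τ) by ring]
    at final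
  exact final

lemma series_equiv_construct (lam : ℕ → ℝ) (a b : ℕ → ℂ) (τ : ℕ → ℝ)
    (hb : ∀ j, Filter.Tendsto (fun m => a j * Complex.exp (Complex.I * lam j * τ m))
      Filter.atTop (nhds (b j))) :
    SeriesEquiv lam a b := by
  intro n
  haveI : FiniteDimensional ℚ (Submodule.span ℚ (lam '' {j | j ≤ n})) :=
    FiniteDimensional.span_of_finite ℚ (Set.Finite.image _ (Set.finite_Iic n))
  set V := Submodule.span ℚ (lam '' {j | j ≤ n}) with hVdef
  set d := Module.finrank ℚ V with hd
  set bV : Module.Basis (Fin d) ℚ V := Module.finBasis ℚ V with hbV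
  set w : Fin (n+1) → V := fun j =>
    ⟨lam j, Submodule.subset_span ⟨j, Nat.lt_succ_iff.mp j.2, rfl⟩⟩ with hw
  set q : Fin (n+1) → Fin d → ℚ := fun j k => bV.repr (w j) k with hq
  set Nd : ℕ := ∏ j : Fin (n+1), ∏ k : Fin d, (q j k).den with hNd
  have hNdpos : 0 < Nd := Finset.prod_pos fun j _ => Finset.prod_pos fun k _ => (q j k).pos
  have hdvd : ∀ j k, (q j k).den ∣ Nd := by
    intro j k
    exact dvd_trans (Finset.dvd_prod_of_mem (fun k => (q j k).den) (Finset.mem_univ k))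
      (Finset.dvd_prod_of_mem (fun j => ∏ k, (q j k).den) (Finset.mem_univ j))
  have hp : ∀ j k, ∃ z : ℤ, (z : ℚ) = q j k * Nd := by
    intro j k
    obtain ⟨m, hm⟩ := hdvd j k
    refine ⟨(q j k).num * m, ?_⟩
    rw [hm]
    push_cast
    rw [← Rat.mul_den_eq_num]
    ring
  choose p hpz using hp
  set v : Fin d → ℝ := fun k => ((bV k : ℝ)) / Nd with hv
  have hqp : ∀ j k, (q j k : ℝ) = (p j k : ℝ) / Nd := by
    intro j k
    have h2 : ((p j k : ℝ)) = (q j k : ℝ) * Nd := by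
      exact_mod_cast congrArg (fun x : ℚ => (x : ℝ)) (hpz j k)
    have hNd0 : (Nd : ℝ) ≠ 0 := Nat.cast_ne_zero.mpr hNdpos.ne'
    field_simp
    linarith [h2]
  have hlam : ∀ j : Fin (n+1), lam j = ∑ k, (p j k : ℝ) * v k := by
    intro j
    have h1 : (∑ k, q j k • bV k) = w j := bV.sum_repr (w j)
    have h2 : lam (j : ℕ) = ((w j : V) : ℝ) := rfl
    rw [h2, ← h1]
    push_cast
    apply Finset.sum_congr rfl
    intro k _
    rw [Rat.smul_def, hqp j k]
    simp only [hv]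
    ring
  -- compactness
  set u : ℕ → (Fin d → ℂ) := fun m k => Complex.exp (Complex.I * v k * τ m) with hu
  have humem : ∀ m, u m ∈ Set.pi Set.univ (fun _ : Fin d => Metric.sphere (0:ℂ) 1) := by
    intro m k _
    rw [mem_sphere_zero_iff_norm]
    exact norm_exp_eq_one (by simp)
  obtain ⟨z, hzS, φs, hφs, hconv⟩ :=
    (isCompact_univ_pi (fun _ : Fin d => isCompact_sphere (0:ℂ) 1)).tendsto_subseq humem
  have hz1 : ∀ k, ∃ θ : ℝ, Complex.exp (θ * Complex.I) = z k := by
    intro k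
    apply (Complex.norm_eq_one_iff _).mp
    have := hzS k (Set.mem_univ k)
    rwa [mem_sphere_zero_iff_norm] at this
  choose θ hθ using hz1
  have hzne : ∀ k, z k ≠ 0 := fun k => by rw [← hθ k]; exact Complex.exp_ne_zero _
  refine ⟨bV.constr ℚ (fun k => (Nd : ℝ) * θ k), ?_⟩
  intro j hj
  set jf : Fin (n+1) := ⟨j, Nat.lt_succ_of_le hj⟩ with hjf
  have hwj : (⟨lam j, Submodule.subset_span ⟨j, hj, rfl⟩⟩ : V) = w jf := rfl
  have hψ : (bV.constr ℚ (fun k => (Nd:ℝ) * θ k)) (w jf) = ∑ k, (p jf k : ℝ) * θ k := by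
    conv_lhs => rw [← bV.sum_repr (w jf)]
    rw [map_sum]
    apply Finset.sum_congr rfl
    intro k _
    rw [_root_.map_smul, Module.Basis.constr_basis, Rat.smul_def, hqp jf k]
    field_simp
  have hexp : ∀ m, Complex.exp (Complex.I * lam (jf:ℕ) * τ m) = ∏ k, (u m k) ^ (p jf k) := by
    intro m
    have harg : Complex.I * ((lam (jf:ℕ) : ℝ) : ℂ) * ((τ m : ℝ):ℂ)
        = ∑ k, ((p jf k : ℤ) : ℂ) * (Complex.I * ((v k:ℝ):ℂ) * ((τ m:ℝ):ℂ)) := by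
      rw [hlam jf]
      push_cast
      rw [Finset.mul_sum, Finset.sum_mul]
      apply Finset.sum_congr rfl
      intro k _
      ring
    rw [harg, Complex.exp_sum]
    exact Finset.prod_congr rfl fun k _ => (Complex.exp_int_mul _ _)
  have hcomp : ∀ k, Filter.Tendsto (fun m => u (φs m) k) Filter.atTop (nhds (z k)) :=
    fun k => ((continuous_apply k).tendsto z).comp hconv
  have hpow : ∀ k, Filter.Tendsto (fun m => (u (φs m) k) ^ (p jf k)) Filter.atTop
      (nhds ((z k) ^ (p jf k))) := fun k =>
    ((continuousAt_zpow₀ (z k) (p jf k) (Or.inl (hzne k))).tendsto).comp (hcomp k)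
  have hlim2 : Filter.Tendsto (fun m => Complex.exp (Complex.I * lam (jf:ℕ) * τ (φs m)))
      Filter.atTop (nhds (∏ k, (z k) ^ (p jf k))) := by
    have := tendsto_finset_prod (Finset.univ) (fun k _ => hpow k)
    exact this.congr (fun m => (hexp (φs m)).symm)
  have hprod : (∏ k, (z k) ^ (p jf k))
      = Complex.exp (Complex.I * (((bV.constr ℚ fun k => (Nd:ℝ)*θ k) (w jf) : ℝ) : ℂ)) := by
    rw [hψ]
    have harg : Complex.I * (((∑ k, (p jf k : ℝ) * θ k : ℝ)) : ℂ)
        = ∑ k, ((p jf k : ℤ) : ℂ) * (((θ k : ℝ):ℂ) * Complex.I) := by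
      push_cast
      rw [Finset.mul_sum]
      apply Finset.sum_congr rfl
      intro k _
      ring
    rw [harg, Complex.exp_sum]
    exact (Finset.prod_congr rfl fun k _ => by
      rw [Complex.exp_int_mul, hθ k]).symm
  have hbj1 : Filter.Tendsto (fun m => a j * Complex.exp (Complex.I * lam j * τ (φs m)))
      Filter.atTop (nhds (b j)) := (hb j).comp hφs.tendsto_atTop
  have hbj2 : Filter.Tendsto (fun m => a j * Complex.exp (Complex.I * lam j * τ (φs m)))
      Filter.atTop (nhds (a j * ∏ k, (z k) ^ (p jf k))) := tendsto_const_nhds.mul hlim2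
  rw [tendsto_nhds_unique hbj1 hbj2, hprod, hwj]

/-- Every uniform limit on `ℝ` of a sequence of translates of an almost periodic
function `f` is almost periodic and Bohr-equivalent to `f`. -/
theorem ap_limit_of_translates (lam : ℕ → ℝ) (hinj : Function.Injective lam)
    (f g : ℝ → ℂ) (a : ℕ → ℂ) (hf : IsAP f) (hfs : HasFourierSeries f lam a)
    (τ : ℕ → ℝ)
    (hlim : TendstoUniformly (fun n (t : ℝ) => f (t + τ n)) g Filter.atTop) :
    IsAP g ∧ ∃ b : ℕ → ℂ, HasFourierSeries g lam b ∧ SeriesEquiv lam a b := by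
  obtain ⟨C, hC0, hC⟩ := hf.bounded
  have hfc : Continuous f := hf.1
  have hgc : Continuous g :=
    hlim.continuous (Filter.Frequently.of_forall fun n =>
      hfc.comp (continuous_id.add continuous_const))
  have hunif : ∀ ε > (0:ℝ), ∃ N, ∀ n ≥ N, ∀ t, ‖g t - f (t + τ n)‖ ≤ ε := by
    intro ε hε
    obtain ⟨N, hN⟩ := Filter.eventually_atTop.mp ((Metric.tendstoUniformly_iff.mp hlim) ε hε)
    exact ⟨N, fun n hn t => by
      have := hN n hn t
      rw [dist_eq_norm] at this
      exact this.le⟩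
  have hgap : IsAP g := by
    refine ⟨hgc, ?_⟩
    intro ε hε
    obtain ⟨l, hl, hP⟩ := hf.2 (ε/3) (by positivity)
    obtain ⟨N, hN⟩ := hunif (ε/3) (by positivity)
    refine ⟨l, hl, fun x => ?_⟩
    obtain ⟨τ₀, hτ₀, hτ₀'⟩ := hP x
    refine ⟨τ₀, hτ₀, fun t => ?_⟩
    have h1 := hN N le_rfl (t + τ₀)
    have h2 := hτ₀' (t + τ N)
    have h3 := hN N le_rfl t
    have e : t + τ₀ + τ N = t + τ N + τ₀ := by ring
    have heq : g (t + τ₀) - g t = (g (t + τ₀) - f (t + τ₀ + τ N))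
        + (f (t + τ N + τ₀) - f (t + τ N)) + (f (t + τ N) - g t) := by
      rw [e]; ring
    calc ‖g (t + τ₀) - g t‖
        ≤ ‖g (t + τ₀) - f (t + τ₀ + τ N)‖ + ‖f (t + τ N + τ₀) - f (t + τ N)‖
          + ‖f (t + τ N) - g t‖ := by rw [heq]; exact norm_add₃_le
      _ ≤ ε/3 + ε/3 + ε/3 := by
          refine add_le_add (add_le_add ?_ h2) ?_
          · exact h1
          · rw [norm_sub_rev]; exact h3
      _ = ε := by ring
  have hecont : ∀ μ : ℝ, Continuous fun t : ℝ =>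
      Complex.exp (-(Complex.I * (μ:ℂ) * (t:ℂ))) := fun μ =>
    Complex.continuous_exp.comp (by continuity)
  have main : ∀ (μ : ℝ) (c : ℂ), HasFourierCoeff f μ c →
      ∃ L, Filter.Tendsto (fun n => c * Complex.exp (Complex.I * μ * τ n))
        Filter.atTop (nhds L) ∧ HasFourierCoeff g μ L := by
    intro μ c hcoef
    have := swap_lim
      (fun T : ℝ => (1 / (2 * T) : ℂ) *
        ∫ t in (-T)..T, g t * Complex.exp (-(Complex.I * (μ : ℂ) * (t : ℂ))))
      (fun n => fun T : ℝ => (1 / (2 * T) : ℂ) *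
        ∫ t in (-T)..T, f (t + τ n) * Complex.exp (-(Complex.I * (μ : ℂ) * (t : ℂ))))
      (fun n => c * Complex.exp (Complex.I * μ * τ n))
      (fun n => coeff_translate hfc hC0 hC hcoef (τ n))
      ?_
    · obtain ⟨L, hL1, hL2⟩ := this
      exact ⟨L, hL1, hL2⟩
    · intro ε hε
      obtain ⟨N, hN⟩ := hunif ε hε
      refine ⟨N, fun n hn T hT => ?_⟩
      have hint1 : IntervalIntegrable
          (fun t => g t * Complex.exp (-(Complex.I * (μ:ℂ) * (t:ℂ)))) volume (-T) T :=
        (hgc.mul (hecont μ)).intervalIntegrable _ _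
      have hint2 : IntervalIntegrable
          (fun t => f (t + τ n) * Complex.exp (-(Complex.I * (μ:ℂ) * (t:ℂ)))) volume (-T) T :=
        ((hfc.comp (continuous_id.add continuous_const)).mul (hecont μ)).intervalIntegrable _ _
      have hsub : (1 / (2 * (T:ℂ))) *
          (∫ t in (-T)..T, g t * Complex.exp (-(Complex.I * (μ:ℂ) * (t:ℂ))))
          - (1 / (2 * (T:ℂ))) *
          (∫ t in (-T)..T, f (t + τ n) * Complex.exp (-(Complex.I * (μ:ℂ) * (t:ℂ))))
          = (1 / (2 * (T:ℂ))) *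
          ∫ t in (-T)..T, (g t - f (t + τ n)) *
            Complex.exp (-(Complex.I * (μ:ℂ) * (t:ℂ))) := by
        rw [← mul_sub, ← intervalIntegral.integral_sub hint1 hint2]
        congr 1
        apply intervalIntegral.integral_congr
        intro t _
        ring
      rw [hsub, norm_mul]
      have hbnd : ‖∫ t in (-T)..T, (g t - f (t + τ n)) *
          Complex.exp (-(Complex.I * (μ:ℂ) * (t:ℂ)))‖ ≤ ε * |T - (-T)| := by
        apply intervalIntegral.norm_integral_le_of_norm_le_const
        intro x _
        rw [norm_mul, norm_exp_eq_one (by simp), mul_one]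
        exact hN n hn x
      have hfac : ‖(1 / (2 * (T:ℂ)))‖ = 1 / (2 * T) := by
        rw [norm_div, norm_one, show (2*(T:ℂ)) = ((2*T:ℝ):ℂ) by push_cast; ring,
          Complex.norm_real, Real.norm_eq_abs, abs_of_pos (by positivity)]
      rw [hfac]
      calc (1 / (2*T)) * ‖∫ t in (-T)..T, (g t - f (t + τ n)) *
            Complex.exp (-(Complex.I * (μ:ℂ) * (t:ℂ)))‖
          ≤ (1 / (2*T)) * (ε * |T - (-T)|) :=
            mul_le_mul_of_nonneg_left hbnd (by positivity)
        _ = ε := by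
            rw [show T - (-T) = 2*T by ring, abs_of_pos (by positivity)]
            field_simp
  choose b hb1 hb2 using fun j => main (lam j) (a j) (hfs.1 j)
  refine ⟨hgap, b, ⟨hb2, ?_⟩, ?_⟩
  · intro μ hμ
    obtain ⟨L, hL1, hL2⟩ := main μ 0 (hfs.2 μ hμ)
    have hL0 : L = 0 := by
      apply tendsto_nhds_unique hL1
      simpa using (tendsto_const_nhds :
        Filter.Tendsto (fun _ : ℕ => (0:ℂ)) Filter.atTop (nhds 0))
    rwa [hL0] at hL2
  · exact series_equiv_construct lam a b τ hb1
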